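/- Let Γ be the random bipartite graph. Then S_{r}(Γ) = {σ ∈ Sym_{l,r}(Γ) : σ preserves the parity of cross-types in every (2×1)-subgraph of Γ}. -/

import Mathlib

/-! Preamble: bipartite graphs, the random bipartite graph, side-preserving
permutation groups, switches, switch groups, and related notions. -/

/-- A bipartite graph on a vertex type `V`: the sides `left` and `right`
partition `V`, both sides are nonempty, and `adj` (the relation `P₁`) only holds
from `left` to `right`.  The relation `P₂` is the complement of `adj` on
`left × right`. -/
structure BipartiteGraph (V : Type*) where
  left : Set V
  right : Set V
  adj : V → V → Prop
  left_nonempty : left.Nonempty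
  right_nonempty : right.Nonempty
  union_eq : left ∪ right = Set.univ
  disjoint_sides : Disjoint left right
  adj_dom : ∀ a b, adj a b → a ∈ left ∧ b ∈ right

/-- The two sides of a bipartite graph. -/
inductive BSide : Type
  | l : BSide
  | r : BSide
deriving DecidableEq

namespace BipartiteGraph

variable {V : Type*} (Γ : BipartiteGraph V)

/-- The side of the graph indexed by an element of `BSide`. -/
def side : BSide → Set V
  | BSide.l => Γ.left
  | BSide.r => Γ.right

/-- `Γ` is (isomorphic to) the random bipartite graph: it is countable, both
sides are infinite, and it satisfies the extension properties `Θₙ` for all `n`. -/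
structure IsRandom : Prop where
  countable : Countable V
  left_infinite : Γ.left.Infinite
  right_infinite : Γ.right.Infinite
  ext_left : ∀ X₁ X₂ : Finset V, ↑X₁ ⊆ Γ.left → ↑X₂ ⊆ Γ.left → Disjoint X₁ X₂ →
      ∃ v ∈ Γ.right, (∀ x ∈ X₁, Γ.adj x v) ∧ (∀ x ∈ X₂, ¬ Γ.adj x v)
  ext_right : ∀ X₁ X₂ : Finset V, ↑X₁ ⊆ Γ.right → ↑X₂ ⊆ Γ.right → Disjoint X₁ X₂ →
      ∃ v ∈ Γ.left, (∀ x ∈ X₁, Γ.adj v x) ∧ (∀ x ∈ X₂, ¬ Γ.adj v x)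

/-- `Sym_{l,r}(Γ)`: the group of permutations of `V` preserving both sides. -/
def symLR : Subgroup (Equiv.Perm V) where
  carrier := {g | (∀ v, g v ∈ Γ.left ↔ v ∈ Γ.left) ∧ (∀ v, g v ∈ Γ.right ↔ v ∈ Γ.right)}
  one_mem' := ⟨fun _ => Iff.rfl, fun _ => Iff.rfl⟩
  mul_mem' := by
    rintro a b ⟨hal, har⟩ ⟨hbl, hbr⟩
    exact ⟨fun v => (hal (b v)).trans (hbl v), fun v => (har (b v)).trans (hbr v)⟩
  inv_mem' := by
    rintro a ⟨hal, har⟩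
    refine ⟨fun v => ?_, fun v => ?_⟩
    · have h := hal (a⁻¹ v); rw [Equiv.Perm.inv_def, Equiv.apply_symm_apply] at h; exact h.symm
    · have h := har (a⁻¹ v); rw [Equiv.Perm.inv_def, Equiv.apply_symm_apply] at h; exact h.symm

/-- The automorphism group of `Γ`: side-preserving permutations preserving `adj`
(and hence both cross-types). -/
def autGroup : Subgroup (Equiv.Perm V) where
  carrier := {g | g ∈ Γ.symLR ∧ ∀ a b, Γ.adj a b ↔ Γ.adj (g a) (g b)}
  one_mem' := ⟨Γ.symLR.one_mem, fun _ _ => Iff.rfl⟩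
  mul_mem' := by
    rintro a b ⟨ha, ha2⟩ ⟨hb, hb2⟩
    exact ⟨mul_mem ha hb, fun x y => (hb2 x y).trans (ha2 (b x) (b y))⟩
  inv_mem' := by
    rintro a ⟨ha, ha2⟩
    refine ⟨inv_mem ha, fun x y => ?_⟩
    have h := ha2 (a⁻¹ x) (a⁻¹ y)
    rw [Equiv.Perm.inv_def, Equiv.apply_symm_apply, Equiv.apply_symm_apply] at h
    exact h.symm

/-- A permutation `g` is a switch with respect to a set `A` if it preserves the
sides and, for every cross-edge `(a, b)`, the cross-type of `(a, b)` is preserved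
if and only if `|{a, b} ∩ A| ≠ 1`. -/
def IsSwitch (g : Equiv.Perm V) (A : Set V) : Prop :=
  g ∈ Γ.symLR ∧ ∀ a ∈ Γ.left, ∀ b ∈ Γ.right,
    ((Γ.adj a b ↔ Γ.adj (g a) (g b)) ↔ ({a, b} ∩ A : Set V).ncard ≠ 1)

/-- The restriction of a map `g` to a set `S` is a switch with respect to `A`:
the condition of `IsSwitch` holds for all cross-edges inside `S`. -/
def IsSwitchOn (g : V → V) (S : Set V) (A : Set V) : Prop :=
  ∀ a ∈ S ∩ Γ.left, ∀ b ∈ S ∩ Γ.right,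
    ((Γ.adj a b ↔ Γ.adj (g a) (g b)) ↔ ({a, b} ∩ A : Set V).ncard ≠ 1)

/-- The restriction of a map `g` to a set `S` is an isomorphism: `g` preserves
the cross-type of every cross-edge inside `S`. -/
def IsIsoOn (g : V → V) (S : Set V) : Prop :=
  ∀ a ∈ S ∩ Γ.left, ∀ b ∈ S ∩ Γ.right, (Γ.adj a b ↔ Γ.adj (g a) (g b))

end BipartiteGraph

/-- A subgroup of the full symmetric group is closed (in the topology of
pointwise convergence) iff it contains every permutation which agrees with some
member of the subgroup on each finite subset. -/
def IsClosedSubgroup {V : Type*} (G : Subgroup (Equiv.Perm V)) : Prop :=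
  ∀ g : Equiv.Perm V, (∀ F : Finset V, ∃ h ∈ G, ∀ x ∈ F, h x = g x) → g ∈ G

/-- The closed subgroup generated by a set of permutations: the intersection of
all closed subgroups containing the set. -/
def closedClosure {V : Type*} (S : Set (Equiv.Perm V)) : Subgroup (Equiv.Perm V) :=
  sInf {G : Subgroup (Equiv.Perm V) | IsClosedSubgroup G ∧ S ⊆ ↑G}

namespace BipartiteGraph

variable {V : Type*} (Γ : BipartiteGraph V)

/-- The switch group `S_X(Γ)`: the closed subgroup of `Sym_{l,r}(Γ)` generated
by `Aut(Γ)` together with all switches with respect to a single vertex `v ∈ R_i`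
for `i ∈ X`. -/
def switchGroup (X : Set BSide) : Subgroup (Equiv.Perm V) :=
  closedClosure ((Γ.autGroup : Set (Equiv.Perm V)) ∪
    {g | ∃ i ∈ X, ∃ v ∈ Γ.side i, Γ.IsSwitch g {v}})

/-- The group `S_X(Γ)* `: the closed subgroup generated by `S_X(Γ)` together with
a switch `ρ` with respect to the whole side `R_l`. -/
def switchGroupStar (X : Set BSide) : Subgroup (Equiv.Perm V) :=
  closedClosure ((Γ.switchGroup X : Set (Equiv.Perm V)) ∪ {g | Γ.IsSwitch g Γ.left})

/-- Membership in `Aut(Γ)*`, the group of side-preserving permutations which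
either preserve all cross-types on `R_l × R_r` or exchange all cross-types on
`R_l × R_r`. -/
def InAutStar (g : Equiv.Perm V) : Prop :=
  g ∈ Γ.symLR ∧
    ((∀ a ∈ Γ.left, ∀ b ∈ Γ.right, (Γ.adj a b ↔ Γ.adj (g a) (g b))) ∨
     (∀ a ∈ Γ.left, ∀ b ∈ Γ.right, (Γ.adj a b ↔ ¬ Γ.adj (g a) (g b))))

/-- The number of cross-edges of cross-type `P₁` inside the set `S`. -/
noncomputable def edgeCount (S : Set V) : ℕ :=
  {p : V × V | p.1 ∈ S ∧ p.2 ∈ S ∧ Γ.adj p.1 p.2}.ncard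

/-- `g` preserves the parity of cross-types on `S`: the number of `P₁`
cross-edges in `S` is even iff the number of `P₁` cross-edges in `g[S]` is even. -/
def PreservesParityOn (g : V → V) (S : Set V) : Prop :=
  Even (Γ.edgeCount S) ↔ Even (Γ.edgeCount (g '' S))

/-- An `(m × n)`-subgraph of `Γ`: a finite set of vertices with `m` vertices on
the left side and `n` vertices on the right side. -/
def IsMNSubgraph (S : Set V) (m n : ℕ) : Prop :=
  S.Finite ∧ (S ∩ Γ.left).ncard = m ∧ (S ∩ Γ.right).ncard = n

end BipartiteGraph
namespace BipartiteGraph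

variable {V : Type*} (Γ : BipartiteGraph V)

lemma not_right_of_left {x : V} (hx : x ∈ Γ.left) : x ∉ Γ.right :=
  fun hx' => Set.disjoint_left.1 Γ.disjoint_sides hx hx'

lemma not_left_of_right {x : V} (hx : x ∈ Γ.right) : x ∉ Γ.left :=
  fun hx' => Set.disjoint_left.1 Γ.disjoint_sides hx' hx

lemma left_or_right (x : V) : x ∈ Γ.left ∨ x ∈ Γ.right := by
  have : x ∈ Γ.left ∪ Γ.right := by rw [Γ.union_eq]; trivial
  exact this

lemma mem_symLR {g : Equiv.Perm V} :
    g ∈ Γ.symLR ↔ (∀ v, g v ∈ Γ.left ↔ v ∈ Γ.left) ∧ (∀ v, g v ∈ Γ.right ↔ v ∈ Γ.right) :=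
  Iff.rfl

lemma mem_autGroup {g : Equiv.Perm V} :
    g ∈ Γ.autGroup ↔ g ∈ Γ.symLR ∧ ∀ a b, Γ.adj a b ↔ Γ.adj (g a) (g b) :=
  Iff.rfl

/-- For `a ≠ b`, the intersection `{a,b} ∩ {v}` has cardinality one iff `v ∈ {a,b}`. -/
lemma inter_single_ncard_eq_one {a b v : V} :
    ({a, b} ∩ {v} : Set V).ncard = 1 ↔ (v = a ∨ v = b) := by
  by_cases h : v = a ∨ v = b
  · have : ({a, b} ∩ {v} : Set V) = {v} := by
      ext x
      simp only [Set.mem_inter_iff, Set.mem_insert_iff, Set.mem_singleton_iff]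
      constructor
      · rintro ⟨_, rfl⟩; rfl
      · rintro rfl; exact ⟨by rcases h with rfl | rfl <;> simp, rfl⟩
    simp [this, h]
  · have : ({a, b} ∩ {v} : Set V) = ∅ := by
      ext x
      simp only [Set.mem_inter_iff, Set.mem_insert_iff, Set.mem_singleton_iff, Set.mem_empty_iff_false,
        iff_false, not_and]
      rintro (rfl | rfl) rfl <;> exact h (by simp)
    rw [this, Set.ncard_empty]
    simp [h]

lemma edgeCount_tri {a₁ a₂ b : V} (h12 : a₁ ≠ a₂) (h1 : a₁ ∈ Γ.left) (h2 : a₂ ∈ Γ.left)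
    (hb : b ∈ Γ.right) :
    (Even (Γ.edgeCount {a₁, a₂, b}) ↔ (Γ.adj a₁ b ↔ Γ.adj a₂ b)) := by
  classical
  have hset : ∀ p : V × V,
      (p.1 ∈ ({a₁, a₂, b} : Set V) ∧ p.2 ∈ ({a₁, a₂, b} : Set V) ∧ Γ.adj p.1 p.2) ↔
      ((p = (a₁, b) ∧ Γ.adj a₁ b) ∨ (p = (a₂, b) ∧ Γ.adj a₂ b)) := by
    rintro ⟨x, y⟩
    simp only [Set.mem_insert_iff, Set.mem_singleton_iff, Prod.mk.injEq, Prod.ext_iff]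
    constructor
    · rintro ⟨hx, hy, hadj⟩
      have hxl := (Γ.adj_dom _ _ hadj).1
      have hyr := (Γ.adj_dom _ _ hadj).2
      have hyb : y = b := by
        rcases hy with rfl | rfl | rfl
        · exact absurd hyr (Γ.not_right_of_left h1)
        · exact absurd hyr (Γ.not_right_of_left h2)
        · rfl
      subst hyb
      rcases hx with rfl | rfl | rfl
      · exact Or.inl ⟨⟨rfl, rfl⟩, hadj⟩
      · exact Or.inr ⟨⟨rfl, rfl⟩, hadj⟩
      · exact absurd hxl (Γ.not_left_of_right hb)
    · rintro (⟨⟨rfl, rfl⟩, h⟩ | ⟨⟨rfl, rfl⟩, h⟩) <;> simp [h]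
  have hE : {p : V × V | p.1 ∈ ({a₁, a₂, b} : Set V) ∧ p.2 ∈ ({a₁, a₂, b} : Set V) ∧ Γ.adj p.1 p.2}
      = {p : V × V | (p = (a₁, b) ∧ Γ.adj a₁ b) ∨ (p = (a₂, b) ∧ Γ.adj a₂ b)} :=
    Set.ext hset
  have hcount : Γ.edgeCount {a₁, a₂, b}
      = {p : V × V | (p = (a₁, b) ∧ Γ.adj a₁ b) ∨ (p = (a₂, b) ∧ Γ.adj a₂ b)}.ncard := by
    rw [edgeCount, hE]
  by_cases e1 : Γ.adj a₁ b <;> by_cases e2 : Γ.adj a₂ b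
  · have : {p : V × V | (p = (a₁, b) ∧ Γ.adj a₁ b) ∨ (p = (a₂, b) ∧ Γ.adj a₂ b)}
        = {(a₁, b), (a₂, b)} := by ext p; simp [e1, e2]
    rw [hcount, this, Set.ncard_pair (by simp [Prod.ext_iff, h12])]
    simp [e1, e2]
  · have : {p : V × V | (p = (a₁, b) ∧ Γ.adj a₁ b) ∨ (p = (a₂, b) ∧ Γ.adj a₂ b)}
        = {(a₁, b)} := by ext p; simp [e1, e2]
    rw [hcount, this, Set.ncard_singleton]
    simp [e1, e2, Nat.even_iff]
  · have : {p : V × V | (p = (a₁, b) ∧ Γ.adj a₁ b) ∨ (p = (a₂, b) ∧ Γ.adj a₂ b)}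
        = {(a₂, b)} := by ext p; simp [e1, e2]
    rw [hcount, this, Set.ncard_singleton]
    simp [e1, e2, Nat.even_iff]
  · have : {p : V × V | (p = (a₁, b) ∧ Γ.adj a₁ b) ∨ (p = (a₂, b) ∧ Γ.adj a₂ b)}
        = (∅ : Set (V × V)) := by ext p; simp [e1, e2]
    rw [hcount, this, Set.ncard_empty]
    simp [e1, e2]

lemma mk21 {a₁ a₂ b : V} (h12 : a₁ ≠ a₂) (h1 : a₁ ∈ Γ.left) (h2 : a₂ ∈ Γ.left)
    (hb : b ∈ Γ.right) : Γ.IsMNSubgraph {a₁, a₂, b} 2 1 := by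
  refine ⟨Set.toFinite _, ?_, ?_⟩
  · have : ({a₁, a₂, b} : Set V) ∩ Γ.left = {a₁, a₂} := by
      ext x
      simp only [Set.mem_inter_iff, Set.mem_insert_iff, Set.mem_singleton_iff]
      constructor
      · rintro ⟨rfl | rfl | rfl, hx⟩
        · exact Or.inl rfl
        · exact Or.inr rfl
        · exact absurd hx (Γ.not_left_of_right hb)
      · rintro (rfl | rfl)
        · exact ⟨Or.inl rfl, h1⟩
        · exact ⟨Or.inr (Or.inl rfl), h2⟩
    rw [this, Set.ncard_pair h12]
  · have : ({a₁, a₂, b} : Set V) ∩ Γ.right = {b} := by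
      ext x
      simp only [Set.mem_inter_iff, Set.mem_insert_iff, Set.mem_singleton_iff]
      constructor
      · rintro ⟨rfl | rfl | rfl, hx⟩
        · exact absurd hx (Γ.not_right_of_left h1)
        · exact absurd hx (Γ.not_right_of_left h2)
        · rfl
      · rintro rfl; exact ⟨Or.inr (Or.inr rfl), hb⟩
    rw [this, Set.ncard_singleton]

lemma decompose21 {S : Set V} (hS : Γ.IsMNSubgraph S 2 1) :
    ∃ a₁ a₂ b, a₁ ≠ a₂ ∧ a₁ ∈ Γ.left ∧ a₂ ∈ Γ.left ∧ b ∈ Γ.right ∧ S = {a₁, a₂, b} := by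
  obtain ⟨hfin, hl, hr⟩ := hS
  obtain ⟨a₁, a₂, h12, hpair⟩ := Set.ncard_eq_two.1 hl
  obtain ⟨b, hsing⟩ := Set.ncard_eq_one.1 hr
  have h1 : a₁ ∈ S ∩ Γ.left := hpair ▸ (by simp)
  have h2 : a₂ ∈ S ∩ Γ.left := hpair ▸ (by simp)
  have hb : b ∈ S ∩ Γ.right := hsing ▸ rfl
  refine ⟨a₁, a₂, b, h12, h1.2, h2.2, hb.2, ?_⟩
  ext x
  constructor
  · intro hx
    rcases Γ.left_or_right x with hxl | hxr
    · have : x ∈ S ∩ Γ.left := ⟨hx, hxl⟩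
      rw [hpair] at this
      rcases this with rfl | rfl
      · exact Or.inl rfl
      · exact Or.inr (Or.inl rfl)
    · have : x ∈ S ∩ Γ.right := ⟨hx, hxr⟩
      rw [hsing] at this
      exact Or.inr (Or.inr this)
  · rintro (rfl | rfl | rfl)
    · exact h1.1
    · exact h2.1
    · exact hb.1

end BipartiteGraph
namespace BipartiteGraph

variable {V : Type*} (Γ : BipartiteGraph V)

lemma ext_left_avoid (hΓ : Γ.IsRandom) (A : Finset V) :
    ∀ X₁ X₂ : Finset V, ↑X₁ ⊆ Γ.left → ↑X₂ ⊆ Γ.left → Disjoint X₁ X₂ →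
      ∃ v ∈ Γ.right, v ∉ A ∧ (∀ x ∈ X₁, Γ.adj x v) ∧ (∀ x ∈ X₂, ¬ Γ.adj x v) := by
  classical
  induction A using Finset.induction_on with
  | empty =>
    intro X₁ X₂ h1 h2 hd
    obtain ⟨v, hv, hp1, hp2⟩ := hΓ.ext_left X₁ X₂ h1 h2 hd
    exact ⟨v, hv, by simp, hp1, hp2⟩
  | @insert w A hw ih =>
    intro X₁ X₂ h1 h2 hd
    by_cases hwr : w ∈ Γ.right
    · obtain ⟨x₀, hx₀l, hx₀⟩ := hΓ.left_infinite.exists_notMem_finset (X₁ ∪ X₂)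
      rw [Finset.mem_union] at hx₀
      push_neg at hx₀
      by_cases hadj : Γ.adj x₀ w
      · obtain ⟨v, hvr, hvA, hp1, hp2⟩ := ih X₁ (insert x₀ X₂) h1
          (by intro x hx; rcases Finset.mem_insert.1 (by exact_mod_cast hx) with rfl | hx'
              · exact hx₀l
              · exact h2 hx')
          (by rw [Finset.disjoint_insert_right]; exact ⟨hx₀.1, hd⟩)
        refine ⟨v, hvr, ?_, hp1, fun x hx => hp2 x (Finset.mem_insert_of_mem hx)⟩
        simp only [Finset.mem_insert]
        rintro (rfl | hvA')
        · exact hp2 x₀ (Finset.mem_insert_self _ _) hadj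
        · exact hvA hvA'
      · obtain ⟨v, hvr, hvA, hp1, hp2⟩ := ih (insert x₀ X₁) X₂
          (by intro x hx; rcases Finset.mem_insert.1 (by exact_mod_cast hx) with rfl | hx'
              · exact hx₀l
              · exact h1 hx')
          h2
          (by rw [Finset.disjoint_insert_left]; exact ⟨hx₀.2, hd⟩)
        refine ⟨v, hvr, ?_, fun x hx => hp1 x (Finset.mem_insert_of_mem hx), hp2⟩
        simp only [Finset.mem_insert]
        rintro (rfl | hvA')
        · exact hadj (hp1 x₀ (Finset.mem_insert_self _ _))
        · exact hvA hvA'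
    · obtain ⟨v, hvr, hvA, hp1, hp2⟩ := ih X₁ X₂ h1 h2 hd
      refine ⟨v, hvr, ?_, hp1, hp2⟩
      simp only [Finset.mem_insert]
      rintro (rfl | hvA')
      · exact hwr hvr
      · exact hvA hvA'

lemma ext_right_avoid (hΓ : Γ.IsRandom) (A : Finset V) :
    ∀ X₁ X₂ : Finset V, ↑X₁ ⊆ Γ.right → ↑X₂ ⊆ Γ.right → Disjoint X₁ X₂ →
      ∃ v ∈ Γ.left, v ∉ A ∧ (∀ x ∈ X₁, Γ.adj v x) ∧ (∀ x ∈ X₂, ¬ Γ.adj v x) := by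
  classical
  induction A using Finset.induction_on with
  | empty =>
    intro X₁ X₂ h1 h2 hd
    obtain ⟨v, hv, hp1, hp2⟩ := hΓ.ext_right X₁ X₂ h1 h2 hd
    exact ⟨v, hv, by simp, hp1, hp2⟩
  | @insert w A hw ih =>
    intro X₁ X₂ h1 h2 hd
    by_cases hwl : w ∈ Γ.left
    · obtain ⟨x₀, hx₀r, hx₀⟩ := hΓ.right_infinite.exists_notMem_finset (X₁ ∪ X₂)
      rw [Finset.mem_union] at hx₀
      push_neg at hx₀
      by_cases hadj : Γ.adj w x₀
      · obtain ⟨v, hvl, hvA, hp1, hp2⟩ := ih X₁ (insert x₀ X₂) h1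
          (by intro x hx; rcases Finset.mem_insert.1 (by exact_mod_cast hx) with rfl | hx'
              · exact hx₀r
              · exact h2 hx')
          (by rw [Finset.disjoint_insert_right]; exact ⟨hx₀.1, hd⟩)
        refine ⟨v, hvl, ?_, hp1, fun x hx => hp2 x (Finset.mem_insert_of_mem hx)⟩
        simp only [Finset.mem_insert]
        rintro (rfl | hvA')
        · exact hp2 x₀ (Finset.mem_insert_self _ _) hadj
        · exact hvA hvA'
      · obtain ⟨v, hvl, hvA, hp1, hp2⟩ := ih (insert x₀ X₁) X₂
          (by intro x hx; rcases Finset.mem_insert.1 (by exact_mod_cast hx) with rfl | hx'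
              · exact hx₀r
              · exact h1 hx')
          h2
          (by rw [Finset.disjoint_insert_left]; exact ⟨hx₀.2, hd⟩)
        refine ⟨v, hvl, ?_, fun x hx => hp1 x (Finset.mem_insert_of_mem hx), hp2⟩
        simp only [Finset.mem_insert]
        rintro (rfl | hvA')
        · exact hadj (hp1 x₀ (Finset.mem_insert_self _ _))
        · exact hvA hvA'
    · obtain ⟨v, hvl, hvA, hp1, hp2⟩ := ih X₁ X₂ h1 h2 hd
      refine ⟨v, hvl, ?_, hp1, hp2⟩
      simp only [Finset.mem_insert]
      rintro (rfl | hvA')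
      · exact hwl hvl
      · exact hvA hvA'

/-- The graph obtained from `Γ` by flipping all cross-edges whose right endpoint
lies in `B`. -/
def twist (B : Set V) : BipartiteGraph V where
  left := Γ.left
  right := Γ.right
  adj a b := a ∈ Γ.left ∧ b ∈ Γ.right ∧ ¬(Γ.adj a b ↔ b ∈ B)
  left_nonempty := Γ.left_nonempty
  right_nonempty := Γ.right_nonempty
  union_eq := Γ.union_eq
  disjoint_sides := Γ.disjoint_sides
  adj_dom := fun _ _ h => ⟨h.1, h.2.1⟩

@[simp] lemma twist_left (B : Set V) : (Γ.twist B).left = Γ.left := rfl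
@[simp] lemma twist_right (B : Set V) : (Γ.twist B).right = Γ.right := rfl

lemma twist_adj {B : Set V} {a b : V} (ha : a ∈ Γ.left) (hb : b ∈ Γ.right) :
    (Γ.twist B).adj a b ↔ ¬(Γ.adj a b ↔ b ∈ B) := by
  simp [twist, ha, hb]

lemma twist_isRandom (hΓ : Γ.IsRandom) (B : Finset V) (hB : ↑B ⊆ Γ.right) :
    (Γ.twist ↑B).IsRandom := by
  classical
  constructor
  · exact hΓ.countable
  · exact hΓ.left_infinite
  · exact hΓ.right_infinite
  · -- ext_left
    intro X₁ X₂ h1 h2 hd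
    obtain ⟨v, hvr, hvB, hp1, hp2⟩ := Γ.ext_left_avoid hΓ B X₁ X₂ h1 h2 hd
    refine ⟨v, hvr, fun x hx => ?_, fun x hx => ?_⟩
    · rw [Γ.twist_adj (h1 hx) hvr]
      simp [hp1 x hx, hvB]
    · rw [Γ.twist_adj (h2 hx) hvr]
      simp [hp2 x hx, hvB]
  · -- ext_right
    intro X₁ X₂ h1 h2 hd
    set Y₁ : Finset V := (X₁.filter (fun x => x ∉ B)) ∪ (X₂.filter (fun x => x ∈ B)) with hY₁
    set Y₂ : Finset V := (X₂.filter (fun x => x ∉ B)) ∪ (X₁.filter (fun x => x ∈ B)) with hY₂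
    have hY₁r : ↑Y₁ ⊆ Γ.right := by
      intro x hx
      simp only [hY₁, Finset.coe_union, Set.mem_union, Finset.coe_filter, Set.mem_setOf_eq] at hx
      rcases hx with ⟨hx, _⟩ | ⟨hx, _⟩
      · exact h1 hx
      · exact h2 hx
    have hY₂r : ↑Y₂ ⊆ Γ.right := by
      intro x hx
      simp only [hY₂, Finset.coe_union, Set.mem_union, Finset.coe_filter, Set.mem_setOf_eq] at hx
      rcases hx with ⟨hx, _⟩ | ⟨hx, _⟩
      · exact h2 hx
      · exact h1 hx
    have hdY : Disjoint Y₁ Y₂ := by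
      rw [Finset.disjoint_left]
      intro x hx₁ hx₂
      simp only [hY₁, hY₂, Finset.mem_union, Finset.mem_filter] at hx₁ hx₂
      have hdx := Finset.disjoint_left.1 hd
      rcases hx₁ with ⟨hx, hnB⟩ | ⟨hx, hBx⟩ <;> rcases hx₂ with ⟨hx', hnB'⟩ | ⟨hx', hB'⟩
      · exact hdx hx hx'
      · exact hnB hB'
      · exact hnB' hBx
      · exact hdx hx' hx
    obtain ⟨v, hvl, hp1, hp2⟩ := hΓ.ext_right Y₁ Y₂ hY₁r hY₂r hdY
    refine ⟨v, hvl, fun x hx => ?_, fun x hx => ?_⟩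
    · rw [Γ.twist_adj hvl (h1 hx)]
      by_cases hxB : x ∈ B
      · have : x ∈ Y₂ := by simp [hY₂, hx, hxB]
        simp [hp2 x this, hxB]
      · have : x ∈ Y₁ := by simp [hY₁, hx, hxB]
        simp [hp1 x this, hxB]
    · rw [Γ.twist_adj hvl (h2 hx)]
      by_cases hxB : x ∈ B
      · have : x ∈ Y₁ := by simp [hY₁, hx, hxB]
        simp [hp1 x this, hxB]
      · have : x ∈ Y₂ := by simp [hY₂, hx, hxB]
        simp [hp2 x this, hxB]

end BipartiteGraph
namespace BipartiteGraph

variable {V : Type*} (Γ₁ Γ₂ : BipartiteGraph V)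

/-- A finite partial isomorphism from `Γ₁` to `Γ₂` (with the same sides). -/
def GoodPair (s : Set V) (f : V → V) : Prop :=
  s.Finite ∧ Set.InjOn f s ∧ (∀ x ∈ s, x ∈ Γ₁.left → f x ∈ Γ₁.left) ∧
    (∀ x ∈ s, x ∈ Γ₁.right → f x ∈ Γ₁.right) ∧
    ∀ a ∈ s, ∀ b ∈ s, a ∈ Γ₁.left → b ∈ Γ₁.right → (Γ₁.adj a b ↔ Γ₂.adj (f a) (f b))

lemma step_dom (hL : Γ₂.left = Γ₁.left) (hR : Γ₂.right = Γ₁.right)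
    (h₂ : Γ₂.IsRandom) {s : Set V} {f : V → V} (hG : GoodPair Γ₁ Γ₂ s f) (x : V) :
    ∃ s' f', GoodPair Γ₁ Γ₂ s' f' ∧ s ⊆ s' ∧ x ∈ s' ∧ ∀ y ∈ s, f' y = f y := by
  classical
  by_cases hx : x ∈ s
  · exact ⟨s, f, hG, Set.Subset.rfl, hx, fun y _ => rfl⟩
  obtain ⟨hfin, hinj, hml, hmr, hiso⟩ := hG
  set t : Finset V := hfin.toFinset with ht
  have htmem : ∀ y, y ∈ t ↔ y ∈ s := fun y => Set.Finite.mem_toFinset hfin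
  rcases Γ₁.left_or_right x with hxl | hxr
  · -- x on the left; find an image for x on the left of Γ₂
    set X₁ : Finset V := (t.filter (fun b => b ∈ Γ₁.right ∧ Γ₁.adj x b)).image f with hX₁
    set X₂ : Finset V := (t.filter (fun b => b ∈ Γ₁.right ∧ ¬ Γ₁.adj x b)).image f with hX₂
    have hX₁r : ↑X₁ ⊆ Γ₂.right := by
      intro u hu
      simp only [hX₁, Finset.coe_image, Set.mem_image, Finset.mem_coe, Finset.mem_filter] at hu
      obtain ⟨b, ⟨hbt, hbr, _⟩, rfl⟩ := hu
      rw [hR]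
      exact hmr b ((htmem b).1 hbt) hbr
    have hX₂r : ↑X₂ ⊆ Γ₂.right := by
      intro u hu
      simp only [hX₂, Finset.coe_image, Set.mem_image, Finset.mem_coe, Finset.mem_filter] at hu
      obtain ⟨b, ⟨hbt, hbr, _⟩, rfl⟩ := hu
      rw [hR]
      exact hmr b ((htmem b).1 hbt) hbr
    have hdX : Disjoint X₁ X₂ := by
      rw [Finset.disjoint_left]
      intro u hu₁ hu₂
      simp only [hX₁, hX₂, Finset.mem_image, Finset.mem_filter] at hu₁ hu₂
      obtain ⟨b, ⟨hbt, hbr, hadj⟩, rfl⟩ := hu₁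
      obtain ⟨b', ⟨hbt', hbr', hnadj⟩, hfb⟩ := hu₂
      have : b' = b := hinj ((htmem b').1 hbt') ((htmem b).1 hbt) hfb
      subst this
      exact hnadj hadj
    obtain ⟨y, hyl, hyA, hp1, hp2⟩ := Γ₂.ext_right_avoid h₂ (t.image f) X₁ X₂ hX₁r hX₂r hdX
    refine ⟨insert x s, Function.update f x y, ⟨hfin.insert x, ?_, ?_, ?_, ?_⟩,
      Set.subset_insert x s, Set.mem_insert x s, fun y' hy' => Function.update_of_ne (fun h => hx (by rw [← h]; exact hy')) _ _⟩
    · -- InjOn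
      intro u hu v hv huv
      rcases Set.mem_insert_iff.1 hu with rfl | hu' <;> rcases Set.mem_insert_iff.1 hv with rfl | hv'
      · rfl
      · rw [Function.update_self, Function.update_of_ne (fun h => hx (by rw [← h]; exact hv'))] at huv
        exact absurd (Finset.mem_image_of_mem f ((htmem v).2 hv')) (huv ▸ hyA)
      · rw [Function.update_self, Function.update_of_ne (fun h => hx (by rw [← h]; exact hu'))] at huv
        exact absurd (Finset.mem_image_of_mem f ((htmem u).2 hu')) (huv.symm ▸ hyA)
      · rw [Function.update_of_ne (fun h => hx (by rw [← h]; exact hu')), Function.update_of_ne (fun h => hx (by rw [← h]; exact hv'))] at huv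
        exact hinj hu' hv' huv
    · -- maps left to left
      intro u hu hul
      rcases Set.mem_insert_iff.1 hu with rfl | hu'
      · rw [Function.update_self, ← hL]; exact hyl
      · rw [Function.update_of_ne (fun h => hx (by rw [← h]; exact hu'))]; exact hml u hu' hul
    · -- maps right to right
      intro u hu hur
      rcases Set.mem_insert_iff.1 hu with rfl | hu'
      · exact absurd hur (Γ₁.not_right_of_left hxl)
      · rw [Function.update_of_ne (fun h => hx (by rw [← h]; exact hu'))]; exact hmr u hu' hur
    · -- iso condition
      intro a ha b hb hal hbr
      rcases Set.mem_insert_iff.1 ha with rfl | ha' <;> rcases Set.mem_insert_iff.1 hb with rfl | hb'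
      · exact absurd hbr (Γ₁.not_right_of_left hxl)
      · rw [Function.update_self, Function.update_of_ne (fun h => hx (by rw [← h]; exact hb'))]
        by_cases hadj : Γ₁.adj a b
        · have : f b ∈ X₁ := by
            simp only [hX₁, Finset.mem_image, Finset.mem_filter]
            exact ⟨b, ⟨(htmem b).2 hb', hbr, hadj⟩, rfl⟩
          simp [hadj, hp1 _ this]
        · have : f b ∈ X₂ := by
            simp only [hX₂, Finset.mem_image, Finset.mem_filter]
            exact ⟨b, ⟨(htmem b).2 hb', hbr, hadj⟩, rfl⟩
          simp [hadj, hp2 _ this]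
      · exact absurd hbr (Γ₁.not_right_of_left hxl)
      · rw [Function.update_of_ne (fun h => hx (by rw [← h]; exact ha')), Function.update_of_ne (fun h => hx (by rw [← h]; exact hb'))]
        exact hiso a ha' b hb' hal hbr
  · -- x on the right
    set X₁ : Finset V := (t.filter (fun a => a ∈ Γ₁.left ∧ Γ₁.adj a x)).image f with hX₁
    set X₂ : Finset V := (t.filter (fun a => a ∈ Γ₁.left ∧ ¬ Γ₁.adj a x)).image f with hX₂
    have hX₁l : ↑X₁ ⊆ Γ₂.left := by
      intro u hu
      simp only [hX₁, Finset.coe_image, Set.mem_image, Finset.mem_coe, Finset.mem_filter] at hu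
      obtain ⟨a, ⟨hat, hal, _⟩, rfl⟩ := hu
      rw [hL]
      exact hml a ((htmem a).1 hat) hal
    have hX₂l : ↑X₂ ⊆ Γ₂.left := by
      intro u hu
      simp only [hX₂, Finset.coe_image, Set.mem_image, Finset.mem_coe, Finset.mem_filter] at hu
      obtain ⟨a, ⟨hat, hal, _⟩, rfl⟩ := hu
      rw [hL]
      exact hml a ((htmem a).1 hat) hal
    have hdX : Disjoint X₁ X₂ := by
      rw [Finset.disjoint_left]
      intro u hu₁ hu₂
      simp only [hX₁, hX₂, Finset.mem_image, Finset.mem_filter] at hu₁ hu₂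
      obtain ⟨a, ⟨hat, hal, hadj⟩, rfl⟩ := hu₁
      obtain ⟨a', ⟨hat', hal', hnadj⟩, hfa⟩ := hu₂
      have : a' = a := hinj ((htmem a').1 hat') ((htmem a).1 hat) hfa
      subst this
      exact hnadj hadj
    obtain ⟨y, hyr, hyA, hp1, hp2⟩ := Γ₂.ext_left_avoid h₂ (t.image f) X₁ X₂ hX₁l hX₂l hdX
    refine ⟨insert x s, Function.update f x y, ⟨hfin.insert x, ?_, ?_, ?_, ?_⟩,
      Set.subset_insert x s, Set.mem_insert x s, fun y' hy' => Function.update_of_ne (fun h => hx (by rw [← h]; exact hy')) _ _⟩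
    · intro u hu v hv huv
      rcases Set.mem_insert_iff.1 hu with rfl | hu' <;> rcases Set.mem_insert_iff.1 hv with rfl | hv'
      · rfl
      · rw [Function.update_self, Function.update_of_ne (fun h => hx (by rw [← h]; exact hv'))] at huv
        exact absurd (Finset.mem_image_of_mem f ((htmem v).2 hv')) (huv ▸ hyA)
      · rw [Function.update_self, Function.update_of_ne (fun h => hx (by rw [← h]; exact hu'))] at huv
        exact absurd (Finset.mem_image_of_mem f ((htmem u).2 hu')) (huv.symm ▸ hyA)
      · rw [Function.update_of_ne (fun h => hx (by rw [← h]; exact hu')), Function.update_of_ne (fun h => hx (by rw [← h]; exact hv'))] at huv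
        exact hinj hu' hv' huv
    · intro u hu hul
      rcases Set.mem_insert_iff.1 hu with rfl | hu'
      · exact absurd hul (Γ₁.not_left_of_right hxr)
      · rw [Function.update_of_ne (fun h => hx (by rw [← h]; exact hu'))]; exact hml u hu' hul
    · intro u hu hur
      rcases Set.mem_insert_iff.1 hu with rfl | hu'
      · rw [Function.update_self, ← hR]; exact hyr
      · rw [Function.update_of_ne (fun h => hx (by rw [← h]; exact hu'))]; exact hmr u hu' hur
    · intro a ha b hb hal hbr
      rcases Set.mem_insert_iff.1 ha with rfl | ha' <;> rcases Set.mem_insert_iff.1 hb with rfl | hb'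
      · exact absurd hal (Γ₁.not_left_of_right hxr)
      · exact absurd hal (Γ₁.not_left_of_right hxr)
      · rw [Function.update_self, Function.update_of_ne (fun h => hx (by rw [← h]; exact ha'))]
        by_cases hadj : Γ₁.adj a b
        · have : f a ∈ X₁ := by
            simp only [hX₁, Finset.mem_image, Finset.mem_filter]
            exact ⟨a, ⟨(htmem a).2 ha', hal, hadj⟩, rfl⟩
          simp [hadj, hp1 _ this]
        · have : f a ∈ X₂ := by
            simp only [hX₂, Finset.mem_image, Finset.mem_filter]
            exact ⟨a, ⟨(htmem a).2 ha', hal, hadj⟩, rfl⟩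
          simp [hadj, hp2 _ this]
      · rw [Function.update_of_ne (fun h => hx (by rw [← h]; exact ha')), Function.update_of_ne (fun h => hx (by rw [← h]; exact hb'))]
        exact hiso a ha' b hb' hal hbr

end BipartiteGraph
namespace BipartiteGraph

variable {V : Type*} (Γ₁ Γ₂ : BipartiteGraph V)

lemma step_ran (h₁ : Γ₁.IsRandom) {s : Set V} {f : V → V} (hG : GoodPair Γ₁ Γ₂ s f) (x : V)
    (hLx : x ∈ Γ₂.left → x ∈ Γ₁.left) (hRx : x ∈ Γ₂.right → x ∈ Γ₁.right) :
    ∃ s' f', GoodPair Γ₁ Γ₂ s' f' ∧ s ⊆ s' ∧ x ∈ f' '' s' ∧ ∀ y ∈ s, f' y = f y := by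
  classical
  by_cases hx : x ∈ f '' s
  · exact ⟨s, f, hG, Set.Subset.rfl, hx, fun y _ => rfl⟩
  obtain ⟨hfin, hinj, hml, hmr, hiso⟩ := hG
  set t : Finset V := hfin.toFinset with ht
  have htmem : ∀ y, y ∈ t ↔ y ∈ s := fun y => Set.Finite.mem_toFinset hfin
  rcases Γ₂.left_or_right x with hxl | hxr
  · -- x on the left of Γ₂ : find a preimage on the left of Γ₁
    have hxl₁ : x ∈ Γ₁.left := hLx hxl
    set X₁ : Finset V := t.filter (fun b => b ∈ Γ₁.right ∧ Γ₂.adj x (f b)) with hX₁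
    set X₂ : Finset V := t.filter (fun b => b ∈ Γ₁.right ∧ ¬ Γ₂.adj x (f b)) with hX₂
    have hX₁r : ↑X₁ ⊆ Γ₁.right := by
      intro u hu
      simp only [hX₁, Finset.coe_filter, Set.mem_setOf_eq] at hu
      exact hu.2.1
    have hX₂r : ↑X₂ ⊆ Γ₁.right := by
      intro u hu
      simp only [hX₂, Finset.coe_filter, Set.mem_setOf_eq] at hu
      exact hu.2.1
    have hdX : Disjoint X₁ X₂ := by
      rw [Finset.disjoint_left]
      intro u hu₁ hu₂
      simp only [hX₁, hX₂, Finset.mem_filter] at hu₁ hu₂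
      exact hu₂.2.2 hu₁.2.2
    obtain ⟨w, hwl, hwA, hp1, hp2⟩ := Γ₁.ext_right_avoid h₁ t X₁ X₂ hX₁r hX₂r hdX
    have hws : w ∉ s := fun h => hwA ((htmem w).2 h)
    refine ⟨insert w s, Function.update f w x, ⟨hfin.insert w, ?_, ?_, ?_, ?_⟩,
      Set.subset_insert w s, ⟨w, Set.mem_insert w s, Function.update_self _ _ _⟩,
      fun y' hy' => Function.update_of_ne (fun h => hws (by rw [← h]; exact hy')) _ _⟩
    · intro u hu v hv huv
      rcases Set.mem_insert_iff.1 hu with rfl | hu' <;> rcases Set.mem_insert_iff.1 hv with rfl | hv'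
      · rfl
      · rw [Function.update_self, Function.update_of_ne (fun h => hws (by rw [← h]; exact hv'))] at huv
        exact absurd ⟨v, hv', huv.symm⟩ hx
      · rw [Function.update_self, Function.update_of_ne (fun h => hws (by rw [← h]; exact hu'))] at huv
        exact absurd ⟨u, hu', huv⟩ hx
      · rw [Function.update_of_ne (fun h => hws (by rw [← h]; exact hu')),
          Function.update_of_ne (fun h => hws (by rw [← h]; exact hv'))] at huv
        exact hinj hu' hv' huv
    · intro u hu hul
      rcases Set.mem_insert_iff.1 hu with rfl | hu'
      · rw [Function.update_self]; exact hxl₁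
      · rw [Function.update_of_ne (fun h => hws (by rw [← h]; exact hu'))]; exact hml u hu' hul
    · intro u hu hur
      rcases Set.mem_insert_iff.1 hu with rfl | hu'
      · exact absurd hur (Γ₁.not_right_of_left hwl)
      · rw [Function.update_of_ne (fun h => hws (by rw [← h]; exact hu'))]; exact hmr u hu' hur
    · intro a ha b hb hal hbr
      rcases Set.mem_insert_iff.1 ha with rfl | ha' <;> rcases Set.mem_insert_iff.1 hb with rfl | hb'
      · exact absurd hbr (Γ₁.not_right_of_left hwl)
      · rw [Function.update_self, Function.update_of_ne (fun h => hws (by rw [← h]; exact hb'))]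
        constructor
        · intro hadj
          by_contra hnadj
          exact hp2 b (by simp [hX₂, (htmem b).2 hb', hbr, hnadj]) hadj
        · intro hadj
          by_contra hnadj
          exact hnadj (hp1 b (by simp [hX₁, (htmem b).2 hb', hbr, hadj]))
      · exact absurd hbr (Γ₁.not_right_of_left hwl)
      · rw [Function.update_of_ne (fun h => hws (by rw [← h]; exact ha')),
          Function.update_of_ne (fun h => hws (by rw [← h]; exact hb'))]
        exact hiso a ha' b hb' hal hbr
  · -- x on the right of Γ₂
    have hxr₁ : x ∈ Γ₁.right := hRx hxr
    set X₁ : Finset V := t.filter (fun a => a ∈ Γ₁.left ∧ Γ₂.adj (f a) x) with hX₁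
    set X₂ : Finset V := t.filter (fun a => a ∈ Γ₁.left ∧ ¬ Γ₂.adj (f a) x) with hX₂
    have hX₁l : ↑X₁ ⊆ Γ₁.left := by
      intro u hu
      simp only [hX₁, Finset.coe_filter, Set.mem_setOf_eq] at hu
      exact hu.2.1
    have hX₂l : ↑X₂ ⊆ Γ₁.left := by
      intro u hu
      simp only [hX₂, Finset.coe_filter, Set.mem_setOf_eq] at hu
      exact hu.2.1
    have hdX : Disjoint X₁ X₂ := by
      rw [Finset.disjoint_left]
      intro u hu₁ hu₂
      simp only [hX₁, hX₂, Finset.mem_filter] at hu₁ hu₂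
      exact hu₂.2.2 hu₁.2.2
    obtain ⟨w, hwr, hwA, hp1, hp2⟩ := Γ₁.ext_left_avoid h₁ t X₁ X₂ hX₁l hX₂l hdX
    have hws : w ∉ s := fun h => hwA ((htmem w).2 h)
    refine ⟨insert w s, Function.update f w x, ⟨hfin.insert w, ?_, ?_, ?_, ?_⟩,
      Set.subset_insert w s, ⟨w, Set.mem_insert w s, Function.update_self _ _ _⟩,
      fun y' hy' => Function.update_of_ne (fun h => hws (by rw [← h]; exact hy')) _ _⟩
    · intro u hu v hv huv
      rcases Set.mem_insert_iff.1 hu with rfl | hu' <;> rcases Set.mem_insert_iff.1 hv with rfl | hv'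
      · rfl
      · rw [Function.update_self, Function.update_of_ne (fun h => hws (by rw [← h]; exact hv'))] at huv
        exact absurd ⟨v, hv', huv.symm⟩ hx
      · rw [Function.update_self, Function.update_of_ne (fun h => hws (by rw [← h]; exact hu'))] at huv
        exact absurd ⟨u, hu', huv⟩ hx
      · rw [Function.update_of_ne (fun h => hws (by rw [← h]; exact hu')),
          Function.update_of_ne (fun h => hws (by rw [← h]; exact hv'))] at huv
        exact hinj hu' hv' huv
    · intro u hu hul
      rcases Set.mem_insert_iff.1 hu with rfl | hu'
      · exact absurd hul (Γ₁.not_left_of_right hwr)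
      · rw [Function.update_of_ne (fun h => hws (by rw [← h]; exact hu'))]; exact hml u hu' hul
    · intro u hu hur
      rcases Set.mem_insert_iff.1 hu with rfl | hu'
      · rw [Function.update_self]; exact hxr₁
      · rw [Function.update_of_ne (fun h => hws (by rw [← h]; exact hu'))]; exact hmr u hu' hur
    · intro a ha b hb hal hbr
      rcases Set.mem_insert_iff.1 ha with rfl | ha' <;> rcases Set.mem_insert_iff.1 hb with rfl | hb'
      · exact absurd hal (Γ₁.not_left_of_right hwr)
      · exact absurd hal (Γ₁.not_left_of_right hwr)
      · rw [Function.update_self, Function.update_of_ne (fun h => hws (by rw [← h]; exact ha'))]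
        constructor
        · intro hadj
          by_contra hnadj
          exact hp2 a (by simp [hX₂, (htmem a).2 ha', hal, hnadj]) hadj
        · intro hadj
          by_contra hnadj
          exact hnadj (hp1 a (by simp [hX₁, (htmem a).2 ha', hal, hadj]))
      · rw [Function.update_of_ne (fun h => hws (by rw [← h]; exact ha')),
          Function.update_of_ne (fun h => hws (by rw [← h]; exact hb'))]
        exact hiso a ha' b hb' hal hbr

lemma step_all (hL : Γ₂.left = Γ₁.left) (hR : Γ₂.right = Γ₁.right)
    (h₁ : Γ₁.IsRandom) (h₂ : Γ₂.IsRandom) {s : Set V} {f : V → V}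
    (hG : GoodPair Γ₁ Γ₂ s f) (x : V) :
    ∃ p : Set V × (V → V), GoodPair Γ₁ Γ₂ p.1 p.2 ∧ s ⊆ p.1 ∧ x ∈ p.1 ∧ x ∈ p.2 '' p.1 ∧
      ∀ y ∈ s, p.2 y = f y := by
  obtain ⟨s', f', hG', hsub', hx', hag'⟩ := step_dom Γ₁ Γ₂ hL hR h₂ hG x
  obtain ⟨s'', f'', hG'', hsub'', hx'', hag''⟩ := step_ran Γ₁ Γ₂ h₁ hG' x
    (fun h => hL ▸ h) (fun h => hR ▸ h)
  refine ⟨(s'', f''), hG'', hsub'.trans hsub'', hsub'' hx', hx'', fun y hy => ?_⟩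
  show f'' y = f y
  rw [hag'' y (hsub' hy), hag' y hy]

lemma exists_global (hL : Γ₂.left = Γ₁.left) (hR : Γ₂.right = Γ₁.right)
    (h₁ : Γ₁.IsRandom) (h₂ : Γ₂.IsRandom) {s₀ : Set V} {f₀ : V → V}
    (h0 : GoodPair Γ₁ Γ₂ s₀ f₀) :
    ∃ g : Equiv.Perm V,
      (∀ v, g v ∈ Γ₁.left ↔ v ∈ Γ₁.left) ∧ (∀ v, g v ∈ Γ₁.right ↔ v ∈ Γ₁.right) ∧
      (∀ a ∈ Γ₁.left, ∀ b ∈ Γ₁.right, (Γ₁.adj a b ↔ Γ₂.adj (g a) (g b))) ∧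
      ∀ x ∈ s₀, g x = f₀ x := by
  classical
  have : Countable V := h₁.countable
  have : Nonempty V := ⟨Γ₁.left_nonempty.choose⟩
  obtain ⟨e, he⟩ := exists_surjective_nat V
  -- build the increasing chain of partial isomorphisms
  let seq : ℕ → {p : Set V × (V → V) // GoodPair Γ₁ Γ₂ p.1 p.2} := fun n =>
    Nat.rec (⟨(s₀, f₀), h0⟩ : {p : Set V × (V → V) // GoodPair Γ₁ Γ₂ p.1 p.2})
      (fun n p =>
        ⟨(step_all Γ₁ Γ₂ hL hR h₁ h₂ p.2 (e n)).choose,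
          (step_all Γ₁ Γ₂ hL hR h₁ h₂ p.2 (e n)).choose_spec.1⟩) n
  set S : ℕ → Set V := fun n => (seq n).1.1 with hS
  set F : ℕ → V → V := fun n => (seq n).1.2 with hF
  have hGn : ∀ n, GoodPair Γ₁ Γ₂ (S n) (F n) := fun n => (seq n).2
  have hstep : ∀ n, S n ⊆ S (n + 1) ∧ e n ∈ S (n + 1) ∧ e n ∈ F (n + 1) '' S (n + 1) ∧
      ∀ y ∈ S n, F (n + 1) y = F n y := by
    intro n
    have h := (step_all Γ₁ Γ₂ hL hR h₁ h₂ (seq n).2 (e n)).choose_spec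
    exact ⟨h.2.1, h.2.2.1, h.2.2.2.1, h.2.2.2.2⟩
  have hmono : ∀ m n, m ≤ n → S m ⊆ S n := by
    intro m n hmn
    induction n, hmn using Nat.le_induction with
    | base => exact Set.Subset.rfl
    | succ n hmn ih => exact ih.trans (hstep n).1
  have hagree : ∀ m n, m ≤ n → ∀ x ∈ S m, F n x = F m x := by
    intro m n hmn
    induction n, hmn using Nat.le_induction with
    | base => exact fun x _ => rfl
    | succ n hmn ih => exact fun x hx => ((hstep n).2.2.2 x (hmono m n hmn hx)).trans (ih x hx)
  have hcover : ∀ x, ∃ n, x ∈ S n := by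
    intro x
    obtain ⟨m, rfl⟩ := he x
    exact ⟨m + 1, (hstep m).2.1⟩
  set gfun : V → V := fun x => F (hcover x).choose x with hgfun
  have hg_eq : ∀ n x, x ∈ S n → gfun x = F n x := by
    intro n x hx
    have hk := (hcover x).choose_spec
    set k := (hcover x).choose
    rcases le_total k n with h | h
    · rw [hgfun]
      simp only
      rw [← hagree k n h x hk]
    · rw [hgfun]
      simp only
      rw [hagree n k h x hx]
  have hinj : Function.Injective gfun := by
    intro x y hxy
    obtain ⟨nx, hnx⟩ := hcover x
    obtain ⟨ny, hny⟩ := hcover y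
    have hx' : x ∈ S (max nx ny) := hmono nx _ (le_max_left _ _) hnx
    have hy' : y ∈ S (max nx ny) := hmono ny _ (le_max_right _ _) hny
    rw [hg_eq _ x hx', hg_eq _ y hy'] at hxy
    exact (hGn (max nx ny)).2.1 hx' hy' hxy
  have hsurj : Function.Surjective gfun := by
    intro y
    obtain ⟨m, rfl⟩ := he y
    obtain ⟨w, hw, hweq⟩ := (hstep m).2.2.1
    exact ⟨w, (hg_eq (m + 1) w hw).trans hweq⟩
  refine ⟨Equiv.ofBijective gfun ⟨hinj, hsurj⟩, ?_, ?_, ?_, ?_⟩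
  · intro v
    obtain ⟨n, hn⟩ := hcover v
    have hgv : (Equiv.ofBijective gfun ⟨hinj, hsurj⟩) v = F n v := hg_eq n v hn
    rw [hgv]
    constructor
    · intro h
      by_contra hv
      rcases Γ₁.left_or_right v with hv' | hv'
      · exact hv hv'
      · exact Γ₁.not_left_of_right ((hGn n).2.2.2.1 v hn hv') h
    · exact (hGn n).2.2.1 v hn
  · intro v
    obtain ⟨n, hn⟩ := hcover v
    have hgv : (Equiv.ofBijective gfun ⟨hinj, hsurj⟩) v = F n v := hg_eq n v hn
    rw [hgv]
    constructor
    · intro h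
      by_contra hv
      rcases Γ₁.left_or_right v with hv' | hv'
      · exact Γ₁.not_right_of_left ((hGn n).2.2.1 v hn hv') h
      · exact hv hv'
    · exact (hGn n).2.2.2.1 v hn
  · intro a hal b hbr
    obtain ⟨na, hna⟩ := hcover a
    obtain ⟨nb, hnb⟩ := hcover b
    have ha' : a ∈ S (max na nb) := hmono na _ (le_max_left _ _) hna
    have hb' : b ∈ S (max na nb) := hmono nb _ (le_max_right _ _) hnb
    have hga : (Equiv.ofBijective gfun ⟨hinj, hsurj⟩) a = F (max na nb) a := hg_eq _ a ha'
    have hgb : (Equiv.ofBijective gfun ⟨hinj, hsurj⟩) b = F (max na nb) b := hg_eq _ b hb'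
    rw [hga, hgb]
    exact (hGn (max na nb)).2.2.2.2 a ha' b hb' hal hbr
  · intro x hx
    have hx0 : x ∈ S 0 := hx
    exact hg_eq 0 x hx0

end BipartiteGraph
namespace BipartiteGraph

variable {V : Type*} (Γ : BipartiteGraph V)

lemma exists_aut_extend (hΓ : Γ.IsRandom) {s : Set V} {f : V → V}
    (h : GoodPair Γ Γ s f) : ∃ α ∈ Γ.autGroup, ∀ x ∈ s, α x = f x := by
  obtain ⟨g, hgl, hgr, hgiso, hgag⟩ := exists_global Γ Γ rfl rfl hΓ hΓ h
  refine ⟨g, ⟨⟨hgl, hgr⟩, fun a b => ?_⟩, hgag⟩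
  by_cases hab : a ∈ Γ.left ∧ b ∈ Γ.right
  · exact hgiso a hab.1 b hab.2
  · constructor
    · intro hadj
      exact absurd (Γ.adj_dom a b hadj) hab
    · intro hadj
      have := Γ.adj_dom _ _ hadj
      exact absurd ⟨(hgl a).1 this.1, (hgr b).1 this.2⟩ hab

lemma exists_single_switch (hΓ : Γ.IsRandom) {w : V} (hw : w ∈ Γ.right) :
    ∃ g : Equiv.Perm V, g ∈ Γ.symLR ∧ Γ.IsSwitch g {w} := by
  classical
  have hrand : (Γ.twist (↑({w} : Finset V))).IsRandom :=
    Γ.twist_isRandom hΓ {w} (by simpa using hw)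
  have h0 : GoodPair (Γ.twist (↑({w} : Finset V))) Γ ∅ id := by
    refine ⟨Set.finite_empty, ?_, ?_, ?_, ?_⟩ <;> simp [Set.InjOn]
  obtain ⟨g, hgl, hgr, hgiso, -⟩ := exists_global (Γ.twist _) Γ rfl rfl hrand hΓ h0
  have hsym : g ∈ Γ.symLR := ⟨hgl, hgr⟩
  refine ⟨g, hsym, hsym, fun a hal b hbr => ?_⟩
  have hiso := hgiso a hal b hbr
  rw [Γ.twist_adj hal hbr] at hiso
  have hne : a ≠ b := fun h => Γ.not_right_of_left hal (h ▸ hbr)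
  have hwa : w ≠ a := fun h => Γ.not_left_of_right hw (h ▸ hal)
  have hcard : (({a, b} ∩ {w} : Set V).ncard = 1) ↔ (w = a ∨ w = b) :=
    inter_single_ncard_eq_one
  by_cases hbw : b = w
  · subst hbw
    have hthis : ¬(Γ.adj a b ↔ Γ.adj (g a) (g b)) := by
      simp only [Finset.coe_singleton, Set.mem_singleton_iff] at hiso
      tauto
    simp only [hthis, false_iff, Ne, not_not]
    rw [hcard]
    exact Or.inr rfl
  · have hthis : Γ.adj a b ↔ Γ.adj (g a) (g b) := by
      simp only [Finset.coe_singleton, Set.mem_singleton_iff] at hiso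
      tauto
    simp only [hthis, true_iff, Ne]
    rw [hcard]
    push_neg
    exact ⟨fun h => hwa h, fun h => hbw h.symm⟩

/-- `g` acts as a switch with respect to `A` on all cross-edges (where `A` is
thought of as a subset of the right side). -/
def SwRt (g : Equiv.Perm V) (A : Set V) : Prop :=
  g ∈ Γ.symLR ∧ ∀ a ∈ Γ.left, ∀ b ∈ Γ.right, ((Γ.adj a b ↔ Γ.adj (g a) (g b)) ↔ b ∉ A)

lemma switch_finset (hΓ : Γ.IsRandom) (G : Subgroup (Equiv.Perm V))
    (hSwG : ∀ g : Equiv.Perm V, ∀ v ∈ Γ.right, Γ.IsSwitch g {v} → g ∈ G)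
    (B : Finset V) (hB : ↑B ⊆ Γ.right) : ∃ τ ∈ G, Γ.SwRt τ ↑B := by
  classical
  induction B using Finset.induction_on with
  | empty =>
    refine ⟨1, one_mem G, Γ.symLR.one_mem, fun a hal b hbr => by simp⟩
  | @insert v B hv ih =>
    have hBr : ↑B ⊆ Γ.right := fun x hx => hB (by exact_mod_cast Finset.mem_insert_of_mem (by exact_mod_cast hx))
    have hvr : v ∈ Γ.right := hB (by simp)
    obtain ⟨τ', hτ'G, hτ'sym, hτ'⟩ := ih hBr
    have hτvr : τ' v ∈ Γ.right := (hτ'sym.2 v).2 hvr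
    obtain ⟨s, hssym, hsw⟩ := Γ.exists_single_switch hΓ hτvr
    have hsG : s ∈ G := hSwG s (τ' v) hτvr hsw
    refine ⟨s * τ', mul_mem hsG hτ'G, mul_mem hssym hτ'sym, fun a hal b hbr => ?_⟩
    have h1 := hτ' a hal b hbr
    have hτ'al : τ' a ∈ Γ.left := (hτ'sym.1 a).2 hal
    have hτ'br : τ' b ∈ Γ.right := (hτ'sym.2 b).2 hbr
    have h2 := hsw.2 (τ' a) hτ'al (τ' b) hτ'br
    have hne : τ' a ≠ τ' b := fun h => Γ.not_right_of_left hτ'al (h ▸ hτ'br)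
    have hcard : (({τ' a, τ' b} ∩ {τ' v} : Set V).ncard = 1) ↔ (τ' v = τ' a ∨ τ' v = τ' b) :=
      inter_single_ncard_eq_one
    have hva : τ' v ≠ τ' a := fun h =>
      Γ.not_left_of_right hvr (by rw [show v = a from τ'.injective h]; exact hal)
    have h2' : (Γ.adj (τ' a) (τ' b) ↔ Γ.adj (s (τ' a)) (s (τ' b))) ↔ b ≠ v := by
      rw [h2, Ne, not_iff_not]
      rw [hcard]
      constructor
      · rintro (h | h)
        · exact absurd h hva
        · exact (τ'.injective h.symm)
      · rintro rfl
        exact Or.inr rfl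
    have hmul : ∀ x, (s * τ') x = s (τ' x) := fun x => rfl
    rw [hmul, hmul]
    have hbv : ¬(b ∈ (B : Set V) ∧ b = v) := by
      rintro ⟨hbB, rfl⟩
      exact hv (by exact_mod_cast hbB)
    have hgoal : (b ∉ (↑(insert v B) : Set V)) ↔ (b ∉ (B : Set V) ∧ b ≠ v) := by
      simp only [Finset.coe_insert, Set.mem_insert_iff, not_or]
      tauto
    rw [hgoal]
    by_cases hbB : b ∈ (B : Set V) <;> by_cases hbveq : b = v
    · exact absurd ⟨hbB, hbveq⟩ hbv
    · have hn1 : ¬(Γ.adj a b ↔ Γ.adj (τ' a) (τ' b)) := by rw [h1]; simp [hbB]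
      have hy2 : Γ.adj (τ' a) (τ' b) ↔ Γ.adj (s (τ' a)) (s (τ' b)) := h2'.2 hbveq
      constructor
      · intro hpr
        exact absurd (hpr.trans hy2.symm) hn1
      · rintro ⟨hc, -⟩
        exact absurd hbB hc
    · subst hbveq
      have hy1 : Γ.adj a b ↔ Γ.adj (τ' a) (τ' b) := h1.2 hbB
      have hn2 : ¬(Γ.adj (τ' a) (τ' b) ↔ Γ.adj (s (τ' a)) (s (τ' b))) := by
        intro h
        exact (h2'.1 h) rfl
      constructor
      · intro hpr
        exact absurd (hy1.symm.trans hpr) hn2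
      · rintro ⟨-, hc⟩
        exact absurd rfl hc
    · have hy1 : Γ.adj a b ↔ Γ.adj (τ' a) (τ' b) := h1.2 hbB
      have hy2 : Γ.adj (τ' a) (τ' b) ↔ Γ.adj (s (τ' a)) (s (τ' b)) := h2'.2 hbveq
      exact ⟨fun _ => ⟨hbB, hbveq⟩, fun _ => hy1.trans hy2⟩

end BipartiteGraph
namespace BipartiteGraph

variable {V : Type*} (Γ : BipartiteGraph V)

lemma image_tri (σ : Equiv.Perm V) (a₁ a₂ b : V) :
    (⇑σ) '' ({a₁, a₂, b} : Set V) = {σ a₁, σ a₂, σ b} := by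
  rw [Set.image_insert_eq, Set.image_insert_eq, Set.image_singleton]

lemma iff_flip_flip {p₁ q₁ p₂ q₂ : Prop} (h1 : ¬(p₁ ↔ q₁)) (h2 : ¬(p₂ ↔ q₂)) :
    ((p₁ ↔ p₂) ↔ (q₁ ↔ q₂)) := by tauto

lemma iff_keep_keep {p₁ q₁ p₂ q₂ : Prop} (h1 : p₁ ↔ q₁) (h2 : p₂ ↔ q₂) :
    ((p₁ ↔ p₂) ↔ (q₁ ↔ q₂)) := by rw [h1, h2]

/-- For a member of `Sym_{l,r}`, parity preservation on the `2×1` graph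
`{a₁,a₂,b}` is equivalent to preservation of the "same-type" relation. -/
lemma parity_tri_iff {σ : Equiv.Perm V} (hσ : σ ∈ Γ.symLR) {a₁ a₂ b : V}
    (h12 : a₁ ≠ a₂) (h1 : a₁ ∈ Γ.left) (h2 : a₂ ∈ Γ.left) (hb : b ∈ Γ.right) :
    Γ.PreservesParityOn (⇑σ) {a₁, a₂, b} ↔
      ((Γ.adj a₁ b ↔ Γ.adj a₂ b) ↔ (Γ.adj (σ a₁) (σ b) ↔ Γ.adj (σ a₂) (σ b))) := by
  have him : (⇑σ) '' ({a₁, a₂, b} : Set V) = {σ a₁, σ a₂, σ b} := image_tri σ a₁ a₂ b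
  have h12' : σ a₁ ≠ σ a₂ := fun h => h12 (σ.injective h)
  have h1' : σ a₁ ∈ Γ.left := (hσ.1 a₁).2 h1
  have h2' : σ a₂ ∈ Γ.left := (hσ.1 a₂).2 h2
  have hb' : σ b ∈ Γ.right := (hσ.2 b).2 hb
  rw [PreservesParityOn, him, Γ.edgeCount_tri h12 h1 h2 hb, Γ.edgeCount_tri h12' h1' h2' hb']

lemma image_21 {σ : Equiv.Perm V} (hσ : σ ∈ Γ.symLR) {S : Set V}
    (hS : Γ.IsMNSubgraph S 2 1) : Γ.IsMNSubgraph ((⇑σ) '' S) 2 1 := by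
  obtain ⟨a₁, a₂, b, h12, h1, h2, hb, rfl⟩ := Γ.decompose21 hS
  rw [image_tri σ a₁ a₂ b]
  exact Γ.mk21 (fun h => h12 (σ.injective h)) ((hσ.1 a₁).2 h1) ((hσ.1 a₂).2 h2) ((hσ.2 b).2 hb)

/-- The set of side-preserving permutations preserving parity on all `2×1`
subgraphs, as a subgroup. -/
def paritySubgroup : Subgroup (Equiv.Perm V) where
  carrier := {σ : Equiv.Perm V | σ ∈ Γ.symLR ∧
    ∀ S : Set V, Γ.IsMNSubgraph S 2 1 → Γ.PreservesParityOn (⇑σ) S}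
  one_mem' := by
    refine ⟨Γ.symLR.one_mem, fun S _ => ?_⟩
    rw [PreservesParityOn]
    simp
  mul_mem' := by
    rintro σ τ ⟨hσsym, hσ⟩ ⟨hτsym, hτ⟩
    refine ⟨mul_mem hσsym hτsym, fun S hS => ?_⟩
    have him : (⇑(σ * τ)) '' S = (⇑σ) '' ((⇑τ) '' S) := by
      rw [← Set.image_comp]; rfl
    rw [PreservesParityOn, him]
    exact (hτ S hS).trans (hσ _ (Γ.image_21 hτsym hS))
  inv_mem' := by
    rintro σ ⟨hσsym, hσ⟩
    refine ⟨inv_mem hσsym, fun S hS => ?_⟩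
    have hT : Γ.IsMNSubgraph ((⇑σ⁻¹) '' S) 2 1 := Γ.image_21 (inv_mem hσsym) hS
    have hback : (⇑σ) '' ((⇑σ⁻¹) '' S) = S := by
      rw [← Set.image_comp]
      have : (⇑σ) ∘ (⇑σ⁻¹) = id := by
        funext x; simp
      rw [this, Set.image_id]
    have := hσ _ hT
    rw [PreservesParityOn, hback] at this
    exact (this.symm : _)

lemma paritySubgroup_closed : IsClosedSubgroup (Γ.paritySubgroup) := by
  intro g hg
  constructor
  · constructor
    · intro v
      obtain ⟨h, hmem, hagree⟩ := hg {v}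
      rw [← hagree v (Finset.mem_singleton_self v)]
      exact hmem.1.1 v
    · intro v
      obtain ⟨h, hmem, hagree⟩ := hg {v}
      rw [← hagree v (Finset.mem_singleton_self v)]
      exact hmem.1.2 v
  · intro S hS
    obtain ⟨a₁, a₂, b, h12, h1, h2, hb, rfl⟩ := Γ.decompose21 hS
    classical
    obtain ⟨h, hmem, hagree⟩ := hg ({a₁, a₂, b} : Finset V)
    have e1 : h a₁ = g a₁ := hagree a₁ (by simp)
    have e2 : h a₂ = g a₂ := hagree a₂ (by simp)
    have eb : h b = g b := hagree b (by simp)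
    have him : (⇑g) '' ({a₁, a₂, b} : Set V) = (⇑h) '' ({a₁, a₂, b} : Set V) := by
      rw [image_tri, image_tri, e1, e2, eb]
    have := hmem.2 _ hS
    rw [PreservesParityOn] at this ⊢
    rw [him]
    exact this

lemma aut_mem_parity {g : Equiv.Perm V} (hg : g ∈ Γ.autGroup) : g ∈ Γ.paritySubgroup := by
  obtain ⟨hsym, hadj⟩ := hg
  refine ⟨hsym, fun S hS => ?_⟩
  obtain ⟨a₁, a₂, b, h12, h1, h2, hb, rfl⟩ := Γ.decompose21 hS
  rw [Γ.parity_tri_iff hsym h12 h1 h2 hb]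
  rw [← hadj a₁ b, ← hadj a₂ b]

lemma switch_mem_parity {g : Equiv.Perm V} {v : V} (hv : v ∈ Γ.right)
    (hg : Γ.IsSwitch g {v}) : g ∈ Γ.paritySubgroup := by
  obtain ⟨hsym, hsw⟩ := hg
  refine ⟨hsym, fun S hS => ?_⟩
  obtain ⟨a₁, a₂, b, h12, h1, h2, hb, rfl⟩ := Γ.decompose21 hS
  rw [Γ.parity_tri_iff hsym h12 h1 h2 hb]
  have k1 := hsw a₁ h1 b hb
  have k2 := hsw a₂ h2 b hb
  have hv1 : v ≠ a₁ := fun h => Γ.not_left_of_right hv (h ▸ h1)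
  have hv2 : v ≠ a₂ := fun h => Γ.not_left_of_right hv (h ▸ h2)
  have c1 : (Γ.adj a₁ b ↔ Γ.adj (g a₁) (g b)) ↔ b ≠ v := by
    rw [k1, Ne, not_iff_not, inter_single_ncard_eq_one]
    constructor
    · rintro (h | h)
      · exact absurd h hv1
      · exact h.symm
    · rintro rfl
      exact Or.inr rfl
  have c2 : (Γ.adj a₂ b ↔ Γ.adj (g a₂) (g b)) ↔ b ≠ v := by
    rw [k2, Ne, not_iff_not, inter_single_ncard_eq_one]
    constructor
    · rintro (h | h)
      · exact absurd h hv2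
      · exact h.symm
    · rintro rfl
      exact Or.inr rfl
  by_cases hbv : b = v
  · have n1 : ¬(Γ.adj a₁ b ↔ Γ.adj (g a₁) (g b)) := fun h => (c1.1 h) hbv
    have n2 : ¬(Γ.adj a₂ b ↔ Γ.adj (g a₂) (g b)) := fun h => (c2.1 h) hbv
    exact iff_flip_flip n1 n2
  · have y1 : Γ.adj a₁ b ↔ Γ.adj (g a₁) (g b) := c1.2 hbv
    have y2 : Γ.adj a₂ b ↔ Γ.adj (g a₂) (g b) := c2.2 hbv
    exact iff_keep_keep y1 y2

end BipartiteGraph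
namespace BipartiteGraph

variable {V : Type*} (Γ : BipartiteGraph V)

lemma iff_rearrange {p₁ p₂ q₁ q₂ : Prop} (h : (p₁ ↔ p₂) ↔ (q₁ ↔ q₂)) :
    ((p₁ ↔ q₁) ↔ (p₂ ↔ q₂)) := by tauto

lemma iff_cancel {p x y c : Prop} (h1 : (p ↔ x) ↔ c) (h2 : (p ↔ y) ↔ c) : x ↔ y := by tauto

lemma parity_mem_switchGroup (hΓ : Γ.IsRandom) {σ : Equiv.Perm V}
    (hsym : σ ∈ Γ.symLR)
    (hpar : ∀ S : Set V, Γ.IsMNSubgraph S 2 1 → Γ.PreservesParityOn (⇑σ) S) :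
    σ ∈ Γ.switchGroup {BSide.r} := by
  classical
  -- constancy of the flip behaviour in the left coordinate
  have hconst : ∀ b ∈ Γ.right, ∀ a ∈ Γ.left, ∀ a' ∈ Γ.left,
      ((Γ.adj a b ↔ Γ.adj (σ a) (σ b)) ↔ (Γ.adj a' b ↔ Γ.adj (σ a') (σ b))) := by
    intro b hb a ha a' ha'
    by_cases h12 : a = a'
    · subst h12; rfl
    · have hP := hpar {a, a', b} (Γ.mk21 h12 ha ha' hb)
      rw [Γ.parity_tri_iff hsym h12 ha ha' hb] at hP
      exact iff_rearrange hP
  set A : Set V := {b | b ∈ Γ.right ∧ ∃ a ∈ Γ.left, ¬(Γ.adj a b ↔ Γ.adj (σ a) (σ b))} with hA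
  have hswA : ∀ a ∈ Γ.left, ∀ b ∈ Γ.right, ((Γ.adj a b ↔ Γ.adj (σ a) (σ b)) ↔ b ∉ A) := by
    intro a ha b hb
    constructor
    · rintro hiff ⟨-, a', ha', hflip⟩
      exact hflip ((hconst b hb a ha a' ha').1 hiff)
    · intro hbA
      by_contra h
      exact hbA ⟨hb, a, ha, h⟩
  have hmem : Γ.switchGroup {BSide.r} = sInf {G : Subgroup (Equiv.Perm V) |
      IsClosedSubgroup G ∧ ((Γ.autGroup : Set (Equiv.Perm V)) ∪
        {g | ∃ i ∈ ({BSide.r} : Set BSide), ∃ v ∈ Γ.side i, Γ.IsSwitch g {v}}) ⊆ ↑G} := rfl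
  rw [hmem, Subgroup.mem_sInf]
  rintro G ⟨hGc, hGgen⟩
  have hAutG : ∀ α : Equiv.Perm V, α ∈ Γ.autGroup → α ∈ G := fun α h =>
    hGgen (Or.inl h)
  have hSwG : ∀ g : Equiv.Perm V, ∀ v ∈ Γ.right, Γ.IsSwitch g {v} → g ∈ G := by
    intro g v hv hs
    exact hGgen (Or.inr ⟨BSide.r, rfl, v, hv, hs⟩)
  apply hGc
  intro F
  set B : Finset V := F.filter (fun b => b ∈ A) with hB
  have hBr : ↑B ⊆ Γ.right := by
    intro x hx
    simp only [hB, Finset.coe_filter, Set.mem_setOf_eq] at hx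
    exact hx.2.1
  obtain ⟨τ, hτG, hτsym, hτ⟩ := Γ.switch_finset hΓ G hSwG B hBr
  set gmap : Equiv.Perm V := σ * τ⁻¹ with hgmap
  have hgmapsym : gmap ∈ Γ.symLR := mul_mem hsym (inv_mem hτsym)
  have hGood : GoodPair Γ Γ ((⇑τ) '' ↑F) ⇑gmap := by
    refine ⟨(F.finite_toSet).image _, (gmap.injective).injOn, ?_, ?_, ?_⟩
    · intro x _ hx
      exact (hgmapsym.1 x).2 hx
    · intro x _ hx
      exact (hgmapsym.2 x).2 hx
    · rintro a ⟨a₀, ha₀F, rfl⟩ b ⟨b₀, hb₀F, rfl⟩ hal hbr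
      have ha₀l : a₀ ∈ Γ.left := (hτsym.1 a₀).1 hal
      have hb₀r : b₀ ∈ Γ.right := (hτsym.2 b₀).1 hbr
      have h1 : (Γ.adj a₀ b₀ ↔ Γ.adj (τ a₀) (τ b₀)) ↔ b₀ ∉ (↑B : Set V) := hτ a₀ ha₀l b₀ hb₀r
      have h2 : (Γ.adj a₀ b₀ ↔ Γ.adj (σ a₀) (σ b₀)) ↔ b₀ ∉ A := hswA a₀ ha₀l b₀ hb₀r
      have hBA : b₀ ∉ (↑B : Set V) ↔ b₀ ∉ A := by
        simp only [hB, Finset.coe_filter, Set.mem_setOf_eq]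
        constructor
        · intro h hA'
          exact h ⟨hb₀F, hA'⟩
        · intro h hA'
          exact h hA'.2
      rw [hBA] at h1
      have hg1 : gmap (τ a₀) = σ a₀ := by
        simp [hgmap]
      have hg2 : gmap (τ b₀) = σ b₀ := by
        simp [hgmap]
      rw [hg1, hg2]
      exact iff_cancel h1 h2
  obtain ⟨α, hαaut, hαag⟩ := Γ.exists_aut_extend hΓ hGood
  refine ⟨α * τ, mul_mem (hAutG α hαaut) hτG, fun x hx => ?_⟩
  have : (α * τ) x = α (τ x) := rfl
  rw [this, hαag (τ x) ⟨x, hx, rfl⟩]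
  simp [hgmap]

end BipartiteGraph

/-- **Lemma 2.4.** `S_{r}(Γ)` is exactly the set of side-preserving
permutations which preserve the parity of cross-types in every
`(2 × 1)`-subgraph of `Γ`. -/
theorem switchGroup_r_eq_parity_preservers {V : Type*} (Γ : BipartiteGraph V)
    (hΓ : Γ.IsRandom) :
    (Γ.switchGroup {BSide.r} : Set (Equiv.Perm V)) =
      {σ : Equiv.Perm V | σ ∈ Γ.symLR ∧
        ∀ S : Set V, Γ.IsMNSubgraph S 2 1 → Γ.PreservesParityOn (⇑σ) S} := by
  ext σ
  simp only [SetLike.mem_coe, Set.mem_setOf_eq]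
  constructor
  · intro hσ
    have hmem : Γ.switchGroup {BSide.r} = sInf {G : Subgroup (Equiv.Perm V) |
        IsClosedSubgroup G ∧ ((Γ.autGroup : Set (Equiv.Perm V)) ∪
          {g | ∃ i ∈ ({BSide.r} : Set BSide), ∃ v ∈ Γ.side i, Γ.IsSwitch g {v}}) ⊆ ↑G} := rfl
    rw [hmem, Subgroup.mem_sInf] at hσ
    have hP : σ ∈ Γ.paritySubgroup := by
      apply hσ
      refine ⟨Γ.paritySubgroup_closed, ?_⟩
      rintro g (hg | ⟨i, hi, v, hv, hsw⟩)
      · exact Γ.aut_mem_parity hg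
      · have : i = BSide.r := hi
        subst this
        exact Γ.switch_mem_parity hv hsw
    exact hP
  · rintro ⟨hsym, hpar⟩
    exact Γ.parity_mem_switchGroup hΓ hsym hpar
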